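/- Fix ω₁, ω₂ ∈ ℂ∖{0} with Im(ω₁/ω₂) > 0, set q = exp(πiω₁/ω₂), q̃ = exp(πiω₂/ω₁), let g > 0, write g^w := exp(w·ln g), and fix λ ∈ ℂ. Let 𝒮(z) = (∏_{m=0}^∞ (1 − q^{2m}·e^{2πiz/ω₂})) / (∏_{m=1}^∞ (1 − q̃^{−2m}·e^{2πiz/ω₁})), and define the dual (F-)Whittaker vector Φ̂¹(t) = e^{2πλt/(ω₁ω₂)} · 𝒮(it + (ω₁ + ω₂)/2 − (iω₁ω₂/(2π))·ln g)⁻¹. Then for every t ∈ ℂ at which 𝒮 is defined (denominator factors nonzero) and nonvanishing at the three arguments involved, Φ̂¹ satisfies the pair of dual difference equations: (1 + q⁻¹·g^{ω₁}·e^{−2πt/ω₂})·Φ̂¹(t + iω₁) = e^{2πiλ/ω₂}·Φ̂¹(t) and (1 + q̃⁻¹·g^{ω₂}·e^{−2πt/ω₁})·Φ̂¹(t + iω₂) = e^{2πiλ/ω₁}·Φ̂¹(t). -/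

import Mathlib

/-- `qparam ω₁ ω₂ = exp(πi·ω₁/ω₂)`; then `q = qparam ω₁ ω₂` and
`q̃ = qparam ω₂ ω₁`. -/
noncomputable def qparam (ω₁ ω₂ : ℂ) : ℂ :=
  Complex.exp ((Real.pi : ℂ) * Complex.I * ω₁ / ω₂)

/-- The function `𝒮(z) = ∏_{m≥0}(1 − q^{2m}·e^{2πiz/ω₂}) / ∏_{m≥1}(1 − q̃^{−2m}·e^{2πiz/ω₁})`. -/
noncomputable def Sfun (ω₁ ω₂ z : ℂ) : ℂ :=
  (∏' m : ℕ, (1 - qparam ω₁ ω₂ ^ (2 * m) *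
      Complex.exp (2 * (Real.pi : ℂ) * Complex.I * z / ω₂))) /
  (∏' m : ℕ, (1 - qparam ω₂ ω₁ ^ (-(2 * ((m : ℤ) + 1))) *
      Complex.exp (2 * (Real.pi : ℂ) * Complex.I * z / ω₁)))

/-- The numerator infinite product of `𝒮` at `z`. -/
noncomputable def SnumProd (ω₁ ω₂ z : ℂ) : ℂ :=
  ∏' m : ℕ, (1 - qparam ω₁ ω₂ ^ (2 * m) *
    Complex.exp (2 * (Real.pi : ℂ) * Complex.I * z / ω₂))

/-- `𝒮` is defined (all denominator factors nonzero) and nonvanishing at `z`. -/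
def SDefinedNeZero (ω₁ ω₂ z : ℂ) : Prop :=
  (∀ m : ℕ, 1 ≤ m →
    1 - qparam ω₂ ω₁ ^ (-(2 * (m : ℤ))) *
      Complex.exp (2 * (Real.pi : ℂ) * Complex.I * z / ω₁) ≠ 0) ∧
  SnumProd ω₁ ω₂ z ≠ 0

/-- The argument of `𝒮` in the dual Whittaker vector `Φ̂¹`:
`it + (ω₁ + ω₂)/2 − (iω₁ω₂/(2π))·ln g`. -/
noncomputable def phi1HatArg (ω₁ ω₂ : ℂ) (g : ℝ) (t : ℂ) : ℂ :=
  Complex.I * t + (ω₁ + ω₂) / 2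
    - Complex.I * ω₁ * ω₂ / (2 * (Real.pi : ℂ)) * (Real.log g : ℂ)

/-- The dual (F-)Whittaker vector
`Φ̂¹(t) = e^{2πλt/(ω₁ω₂)}·𝒮(it + (ω₁ + ω₂)/2 − (iω₁ω₂/(2π))·ln g)⁻¹`. -/
noncomputable def Phi1Hat (ω₁ ω₂ : ℂ) (g : ℝ) (lam t : ℂ) : ℂ :=
  Complex.exp (2 * (Real.pi : ℂ) * lam * t / (ω₁ * ω₂)) *
    (Sfun ω₁ ω₂ (phi1HatArg ω₁ ω₂ g t))⁻¹

open Complex Filter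

/-- The denominator infinite product of `𝒮` at `z` (auxiliary). -/
noncomputable def SdenProd (ω₁ ω₂ z : ℂ) : ℂ :=
  ∏' m : ℕ, (1 - qparam ω₂ ω₁ ^ (-(2 * ((m : ℤ) + 1))) *
    Complex.exp (2 * (Real.pi : ℂ) * Complex.I * z / ω₁))

lemma Sfun_eq_div (ω₁ ω₂ z : ℂ) : Sfun ω₁ ω₂ z = SnumProd ω₁ ω₂ z / SdenProd ω₁ ω₂ z := rfl

lemma hasProd_zero_of_eq_zero {f : ℕ → ℂ} {m : ℕ} (h : f m = 0) : HasProd f 0 := by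
  have hev : ∀ᶠ s : Finset ℕ in atTop, ∏ i ∈ s, f i = 0 := by
    filter_upwards [Filter.eventually_ge_atTop {m}] with s hs
    exact Finset.prod_eq_zero (hs (Finset.mem_singleton_self m)) h
  exact Tendsto.congr' (hev.mono fun s hs => hs.symm) tendsto_const_nhds

lemma summable_log_one_sub (a b : ℂ) (hb : ‖b‖ < 1) :
    Summable (fun m : ℕ => Complex.log (1 - a * b ^ m)) := by
  have hgeo : Summable (fun m : ℕ => (3/2 : ℝ) * (‖a‖ * ‖b‖ ^ m)) :=
    (((summable_geometric_of_lt_one (norm_nonneg b) hb).mul_left ‖a‖)).mul_left _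
  apply Summable.of_norm_bounded_eventually_nat hgeo
  have htend : Tendsto (fun m : ℕ => ‖a‖ * ‖b‖ ^ m) atTop (nhds 0) := by
    simpa using (tendsto_pow_atTop_nhds_zero_of_lt_one (norm_nonneg b) hb).const_mul ‖a‖
  have hev : ∀ᶠ m : ℕ in atTop, ‖a‖ * ‖b‖ ^ m ≤ 1/2 :=
    htend.eventually_le_const (by norm_num)
  filter_upwards [hev] with m hm
  have h1 : ‖-(a * b ^ m)‖ ≤ 1/2 := by
    rw [norm_neg, norm_mul, norm_pow]; exact hm
  calc ‖Complex.log (1 - a * b ^ m)‖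
      = ‖Complex.log (1 + -(a * b ^ m))‖ := by rw [sub_eq_add_neg]
    _ ≤ 3/2 * ‖-(a * b ^ m)‖ := Complex.norm_log_one_add_half_le_self h1
    _ = 3/2 * (‖a‖ * ‖b‖ ^ m) := by rw [norm_neg, norm_mul, norm_pow]

lemma multipliable_one_sub (a b : ℂ) (hb : ‖b‖ < 1) :
    Multipliable (fun m : ℕ => 1 - a * b ^ m) := by
  by_cases h : ∀ m : ℕ, 1 - a * b ^ m ≠ 0
  · exact Complex.multipliable_of_summable_log (summable_log_one_sub a b hb)
  · push_neg at h
    obtain ⟨m, hm⟩ := h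
    exact ⟨0, hasProd_zero_of_eq_zero hm⟩

set_option maxHeartbeats 1600000 in
lemma P_shift (a b : ℂ) (hb : ‖b‖ < 1) :
    ∏' m : ℕ, (1 - a * b ^ m) = (1 - a) * ∏' m : ℕ, (1 - (a * b) * b ^ m) := by
  have hm : Multipliable (fun m : ℕ => 1 - a * b ^ (m + 1)) := by
    refine (multipliable_one_sub (a * b) b hb).congr fun m => ?_
    rw [pow_succ]; ring
  rw [tprod_eq_zero_mul' hm]
  simp only [pow_zero, mul_one]
  congr 1
  exact tprod_congr fun m => by rw [pow_succ]; ring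

lemma norm_exp_lt_one_of_re_neg {z : ℂ} (h : z.re < 0) : ‖Complex.exp z‖ < 1 := by
  rw [Complex.norm_exp]
  exact Real.exp_lt_one_iff.mpr h

lemma norm_qparam_lt_one {ω₁ ω₂ : ℂ} (him : 0 < (ω₁ / ω₂).im) : ‖qparam ω₁ ω₂‖ < 1 := by
  apply norm_exp_lt_one_of_re_neg
  have h : (Real.pi : ℂ) * Complex.I * ω₁ / ω₂ = (Real.pi : ℂ) * (Complex.I * (ω₁ / ω₂)) := by
    ring
  rw [h]
  simp only [Complex.mul_re, Complex.mul_im, Complex.I_re, Complex.I_im, Complex.ofReal_re,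
    Complex.ofReal_im]
  nlinarith [Real.pi_pos, him]

lemma norm_inv_qparam_lt_one {ω₁ ω₂ : ℂ} (hω₁ : ω₁ ≠ 0) (hω₂ : ω₂ ≠ 0)
    (him : 0 < (ω₁ / ω₂).im) : ‖(qparam ω₂ ω₁)⁻¹‖ < 1 := by
  rw [qparam, ← Complex.exp_neg]
  apply norm_exp_lt_one_of_re_neg
  have him' : (ω₂ / ω₁).im < 0 := by
    rw [← inv_div ω₁ ω₂, Complex.inv_im]
    apply div_neg_of_neg_of_pos (by linarith)
    have : ω₁ / ω₂ ≠ 0 := div_ne_zero hω₁ hω₂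
    exact Complex.normSq_pos.mpr this
  have h : -((Real.pi : ℂ) * Complex.I * ω₂ / ω₁) =
      (Real.pi : ℂ) * (Complex.I * -(ω₂ / ω₁)) := by ring
  rw [h]
  simp only [Complex.mul_re, Complex.mul_im, Complex.I_re, Complex.I_im, Complex.ofReal_re,
    Complex.ofReal_im, Complex.neg_re, Complex.neg_im]
  nlinarith [Real.pi_pos, him']

/-- The dual Whittaker vector `Φ̂¹` satisfies the pair of dual difference equations
`(1 + q⁻¹·g^{ω₁}·e^{−2πt/ω₂})·Φ̂¹(t + iω₁) = e^{2πiλ/ω₂}·Φ̂¹(t)` and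
`(1 + q̃⁻¹·g^{ω₂}·e^{−2πt/ω₁})·Φ̂¹(t + iω₂) = e^{2πiλ/ω₁}·Φ̂¹(t)`. -/
theorem whittaker_vector_Phi1Hat_difference_equations
    (ω₁ ω₂ : ℂ) (hω₁ : ω₁ ≠ 0) (hω₂ : ω₂ ≠ 0) (him : 0 < (ω₁ / ω₂).im)
    (g : ℝ) (hg : 0 < g) (lam t : ℂ)
    (h1 : SDefinedNeZero ω₁ ω₂ (phi1HatArg ω₁ ω₂ g t))
    (h2 : SDefinedNeZero ω₁ ω₂ (phi1HatArg ω₁ ω₂ g t - ω₁))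
    (h3 : SDefinedNeZero ω₁ ω₂ (phi1HatArg ω₁ ω₂ g t - ω₂)) :
    (1 + (qparam ω₁ ω₂)⁻¹ * Complex.exp (ω₁ * (Real.log g : ℂ)) *
          Complex.exp (-(2 * (Real.pi : ℂ) * t / ω₂))) *
        Phi1Hat ω₁ ω₂ g lam (t + Complex.I * ω₁)
      = Complex.exp (2 * (Real.pi : ℂ) * Complex.I * lam / ω₂) * Phi1Hat ω₁ ω₂ g lam t ∧
    (1 + (qparam ω₂ ω₁)⁻¹ * Complex.exp (ω₂ * (Real.log g : ℂ)) *
          Complex.exp (-(2 * (Real.pi : ℂ) * t / ω₁))) *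
        Phi1Hat ω₁ ω₂ g lam (t + Complex.I * ω₂)
      = Complex.exp (2 * (Real.pi : ℂ) * Complex.I * lam / ω₁) * Phi1Hat ω₁ ω₂ g lam t := by
  have hπ : (Real.pi : ℂ) ≠ 0 := Complex.ofReal_ne_zero.mpr Real.pi_ne_zero
  set lg : ℂ := (Real.log g : ℂ) with hlg
  set w : ℂ := phi1HatArg ω₁ ω₂ g t with hwdef
  set E : ℂ → ℂ := fun z => Complex.exp (2 * (Real.pi : ℂ) * Complex.I * z / ω₂) with hE
  set F : ℂ → ℂ := fun z => Complex.exp (2 * (Real.pi : ℂ) * Complex.I * z / ω₁) with hF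
  set Q : ℂ := qparam ω₁ ω₂ ^ 2 with hQ
  set R : ℂ := ((qparam ω₂ ω₁)⁻¹) ^ 2 with hR
  -- basic norms
  have hQnorm : ‖Q‖ < 1 := by
    rw [hQ, norm_pow]
    exact pow_lt_one₀ (norm_nonneg _) (norm_qparam_lt_one him) (by norm_num)
  have hRnorm : ‖R‖ < 1 := by
    rw [hR, norm_pow]
    exact pow_lt_one₀ (norm_nonneg _) (norm_inv_qparam_lt_one hω₁ hω₂ him) (by norm_num)
  -- exp identities
  have hQE : Q = Complex.exp (2 * (Real.pi : ℂ) * Complex.I * ω₁ / ω₂) := by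
    rw [hQ, qparam, sq, ← Complex.exp_add]; congr 1; ring
  have hRF : R = Complex.exp (-(2 * (Real.pi : ℂ) * Complex.I * ω₂ / ω₁)) := by
    rw [hR, qparam, ← Complex.exp_neg, sq, ← Complex.exp_add]; congr 1; ring
  have hEshift : ∀ z : ℂ, E (z + ω₁) = Q * E z := by
    intro z
    rw [hQE, hE]
    simp only
    rw [← Complex.exp_add]; congr 1; ring
  have hexp2pi : Complex.exp (-(2 * (Real.pi : ℂ) * Complex.I)) = 1 := by
    rw [Complex.exp_neg, Complex.exp_two_pi_mul_I, inv_one]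
  have hEperiod : ∀ z : ℂ, E (z - ω₂) = E z := by
    intro z
    rw [hE]; simp only
    rw [show 2 * (Real.pi : ℂ) * Complex.I * (z - ω₂) / ω₂
        = 2 * (Real.pi : ℂ) * Complex.I * z / ω₂ + (-(2 * (Real.pi : ℂ) * Complex.I)) by
      field_simp; ring, Complex.exp_add, hexp2pi, mul_one]
  have hFperiod : ∀ z : ℂ, F (z - ω₁) = F z := by
    intro z
    rw [hF]; simp only
    rw [show 2 * (Real.pi : ℂ) * Complex.I * (z - ω₁) / ω₁
        = 2 * (Real.pi : ℂ) * Complex.I * z / ω₁ + (-(2 * (Real.pi : ℂ) * Complex.I)) by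
      field_simp; ring, Complex.exp_add, hexp2pi, mul_one]
  have hFshift : ∀ z : ℂ, F (z - ω₂) = R * F z := by
    intro z
    rw [hRF, hF]; simp only
    rw [← Complex.exp_add]; congr 1; field_simp; ring
  -- rewriting the numerator and denominator products in `P` form
  have hnumP : ∀ z : ℂ, SnumProd ω₁ ω₂ z = ∏' m : ℕ, (1 - E z * Q ^ m) := by
    intro z
    refine tprod_congr fun m => ?_
    simp only [hE]
    rw [hQ, ← pow_mul]
    ring
  have hdenP : ∀ z : ℂ, SdenProd ω₁ ω₂ z = ∏' m : ℕ, (1 - (R * F z) * R ^ m) := by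
    intro z
    refine tprod_congr fun m => ?_
    have hz : qparam ω₂ ω₁ ^ (-(2 * ((m : ℤ) + 1))) = R * R ^ m := by
      have h1 : qparam ω₂ ω₁ ^ (-(2 * ((m : ℤ) + 1)))
          = ((qparam ω₂ ω₁)⁻¹) ^ (2 * (m + 1) : ℕ) := by
        rw [← zpow_natCast ((qparam ω₂ ω₁)⁻¹) (2 * (m + 1)), inv_zpow, ← zpow_neg]
        congr 1
      rw [h1, pow_mul, hR, pow_succ]; ring
    rw [hz]; simp only [hF]; ring
  -- numerator shift: N(z) = (1 - E z) N(z + ω₁)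
  have hnum_shift : ∀ z : ℂ, SnumProd ω₁ ω₂ z = (1 - E z) * SnumProd ω₁ ω₂ (z + ω₁) := by
    intro z
    rw [hnumP z, hnumP (z + ω₁), P_shift (E z) Q hQnorm]
    congr 1
    exact tprod_congr fun m => by rw [hEshift z]; ring
  -- denominator shift: D(z) = (1 - R F z) D(z - ω₂)
  have hden_shift : ∀ z : ℂ, SdenProd ω₁ ω₂ z = (1 - R * F z) * SdenProd ω₁ ω₂ (z - ω₂) := by
    intro z
    rw [hdenP z, hdenP (z - ω₂), P_shift (R * F z) R hRnorm]
    congr 1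
    exact tprod_congr fun m => by rw [hFshift z]; ring
  -- periodicity
  have hden_per : ∀ z : ℂ, SdenProd ω₁ ω₂ (z - ω₁) = SdenProd ω₁ ω₂ z :=
    fun z => tprod_congr fun m => by rw [show (2 : ℂ) * (Real.pi : ℂ) * Complex.I * (z - ω₁) / ω₁
        = 2 * (Real.pi : ℂ) * Complex.I * z / ω₁ + (-(2 * (Real.pi : ℂ) * Complex.I)) by
      field_simp; ring, Complex.exp_add, hexp2pi, mul_one]
  have hnum_per : ∀ z : ℂ, SnumProd ω₁ ω₂ (z - ω₂) = SnumProd ω₁ ω₂ z :=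
    fun z => tprod_congr fun m => by rw [show (2 : ℂ) * (Real.pi : ℂ) * Complex.I * (z - ω₂) / ω₂
        = 2 * (Real.pi : ℂ) * Complex.I * z / ω₂ + (-(2 * (Real.pi : ℂ) * Complex.I)) by
      field_simp; ring, Complex.exp_add, hexp2pi, mul_one]
  -- arguments of the shifted Whittaker vectors
  have hw1 : phi1HatArg ω₁ ω₂ g (t + Complex.I * ω₁) = w - ω₁ := by
    rw [hwdef]; unfold phi1HatArg
    linear_combination ω₁ * Complex.I_mul_I
  have hw2 : phi1HatArg ω₁ ω₂ g (t + Complex.I * ω₂) = w - ω₂ := by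
    rw [hwdef]; unfold phi1HatArg
    linear_combination ω₂ * Complex.I_mul_I
  -- the prefactors
  have hA : 1 + (qparam ω₁ ω₂)⁻¹ * Complex.exp (ω₁ * lg) *
      Complex.exp (-(2 * (Real.pi : ℂ) * t / ω₂)) = 1 - E (w - ω₁) := by
    have hX : E (w - ω₁) = -((qparam ω₁ ω₂)⁻¹ * Complex.exp (ω₁ * lg) *
        Complex.exp (-(2 * (Real.pi : ℂ) * t / ω₂))) := by
      rw [hE]; simp only
      have hmerge : (qparam ω₁ ω₂)⁻¹ * Complex.exp (ω₁ * lg) *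
          Complex.exp (-(2 * (Real.pi : ℂ) * t / ω₂))
          = Complex.exp (-((Real.pi : ℂ) * Complex.I * ω₁ / ω₂) + ω₁ * lg +
            -(2 * (Real.pi : ℂ) * t / ω₂)) := by
        rw [qparam, ← Complex.exp_neg, ← Complex.exp_add, ← Complex.exp_add]
      rw [hmerge, show -Complex.exp (-((Real.pi : ℂ) * Complex.I * ω₁ / ω₂) + ω₁ * lg +
          -(2 * (Real.pi : ℂ) * t / ω₂)) = Complex.exp ((Real.pi : ℂ) * Complex.I +
          (-((Real.pi : ℂ) * Complex.I * ω₁ / ω₂) + ω₁ * lg +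
          -(2 * (Real.pi : ℂ) * t / ω₂))) by
        conv_rhs => rw [Complex.exp_add, Complex.exp_pi_mul_I]
        ring]
      congr 1
      rw [hwdef]; unfold phi1HatArg
      field_simp
      linear_combination (2 * (Real.pi : ℂ) * t
        - ω₁ * ω₂ * (Real.log g : ℂ)) * Complex.I_mul_I
    rw [hX]; ring
  -- eq1 ingredients
  have hnum2 : SnumProd ω₁ ω₂ (w - ω₁) = (1 - E (w - ω₁)) * SnumProd ω₁ ω₂ w := by
    have h := hnum_shift (w - ω₁)
    rwa [sub_add_cancel] at h
  have hAne : (1 - E (w - ω₁)) ≠ 0 := left_ne_zero_of_mul (hnum2 ▸ h2.2)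
  have hSfun1 : Sfun ω₁ ω₂ (w - ω₁) = (1 - E (w - ω₁)) * Sfun ω₁ ω₂ w := by
    rw [Sfun_eq_div, Sfun_eq_div, hnum2, hden_per w, mul_div_assoc]
  have hexp1 : Complex.exp (2 * (Real.pi : ℂ) * lam * (t + Complex.I * ω₁) / (ω₁ * ω₂))
      = Complex.exp (2 * (Real.pi : ℂ) * Complex.I * lam / ω₂) *
        Complex.exp (2 * (Real.pi : ℂ) * lam * t / (ω₁ * ω₂)) := by
    rw [← Complex.exp_add]; congr 1; field_simp; ring
  -- eq2 ingredients
  have hR1 : qparam ω₂ ω₁ ^ (-(2 * ((1 : ℕ) : ℤ))) = R := by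
    rw [show -(2 * ((1 : ℕ) : ℤ)) = -((2 : ℕ) : ℤ) by norm_num, zpow_neg, zpow_natCast,
      ← inv_pow, hR]
  have hBne : (1 - R * F w) ≠ 0 := by
    have hb := h1.1 1 le_rfl
    rw [hR1] at hb
    simpa only [hF] using hb
  have hSfun2 : Sfun ω₁ ω₂ (w - ω₂) = (1 - R * F w) * Sfun ω₁ ω₂ w := by
    rw [Sfun_eq_div, Sfun_eq_div, hnum_per w, hden_shift w, ← mul_div_assoc,
      mul_div_mul_left _ _ hBne]
  have hB : 1 + (qparam ω₂ ω₁)⁻¹ * Complex.exp (ω₂ * lg) *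
      Complex.exp (-(2 * (Real.pi : ℂ) * t / ω₁)) = 1 - R * F w := by
    have hX : R * F w = -((qparam ω₂ ω₁)⁻¹ * Complex.exp (ω₂ * lg) *
        Complex.exp (-(2 * (Real.pi : ℂ) * t / ω₁))) := by
      rw [hRF, hF]; simp only
      rw [← Complex.exp_add]
      have hmerge : (qparam ω₂ ω₁)⁻¹ * Complex.exp (ω₂ * lg) *
          Complex.exp (-(2 * (Real.pi : ℂ) * t / ω₁))
          = Complex.exp (-((Real.pi : ℂ) * Complex.I * ω₂ / ω₁) + ω₂ * lg +
            -(2 * (Real.pi : ℂ) * t / ω₁)) := by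
        rw [qparam, ← Complex.exp_neg, ← Complex.exp_add, ← Complex.exp_add]
      rw [hmerge, show -Complex.exp (-((Real.pi : ℂ) * Complex.I * ω₂ / ω₁) + ω₂ * lg +
          -(2 * (Real.pi : ℂ) * t / ω₁)) = Complex.exp ((Real.pi : ℂ) * Complex.I +
          (-((Real.pi : ℂ) * Complex.I * ω₂ / ω₁) + ω₂ * lg +
          -(2 * (Real.pi : ℂ) * t / ω₁))) by
        conv_rhs => rw [Complex.exp_add, Complex.exp_pi_mul_I]
        ring]
      congr 1
      rw [hwdef]; unfold phi1HatArg
      field_simp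
      linear_combination (2 * (Real.pi : ℂ) * t - ω₁ * ω₂ * (Real.log g : ℂ)) * Complex.I_mul_I
    rw [hX]; ring
  have hexp2 : Complex.exp (2 * (Real.pi : ℂ) * lam * (t + Complex.I * ω₂) / (ω₁ * ω₂))
      = Complex.exp (2 * (Real.pi : ℂ) * Complex.I * lam / ω₁) *
        Complex.exp (2 * (Real.pi : ℂ) * lam * t / (ω₁ * ω₂)) := by
    rw [← Complex.exp_add]; congr 1; field_simp; ring
  constructor
  · unfold Phi1Hat
    rw [← hwdef, hw1, hSfun1, hA, hexp1, mul_inv]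
    linear_combination (Complex.exp (2 * (Real.pi : ℂ) * Complex.I * lam / ω₂) *
      Complex.exp (2 * (Real.pi : ℂ) * lam * t / (ω₁ * ω₂)) * (Sfun ω₁ ω₂ w)⁻¹) *
      (mul_inv_cancel₀ hAne)
  · unfold Phi1Hat
    rw [← hwdef, hw2, hSfun2, hB, hexp2, mul_inv]
    linear_combination (Complex.exp (2 * (Real.pi : ℂ) * Complex.I * lam / ω₁) *
      Complex.exp (2 * (Real.pi : ℂ) * lam * t / (ω₁ * ω₂)) * (Sfun ω₁ ω₂ w)⁻¹) *
      (mul_inv_cancel₀ hBne)
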